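/- For all positive integers n and m, τ(nm) = Σ_{d | gcd(n,m)} μ(d) τ(n/d) τ(m/d), where τ is the number-of-divisors function and μ is the Möbius function. -/

import Mathlib

open Finset

lemma aux_card_div (n d : ℕ) (hn : n ≠ 0) (hd : d ∣ n) :
    (((n / d).divisors.card : ℤ)) =
      ∏ p ∈ n.primeFactors, (((n / d).factorization p : ℤ) + 1) := by
  have hd0 : d ≠ 0 := by rintro rfl; simp at hd; exact hn hd
  have hnd : n / d ≠ 0 :=
    Nat.div_ne_zero_iff.mpr ⟨hd0, Nat.le_of_dvd (Nat.pos_of_ne_zero hn) hd⟩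
  rw [Nat.card_divisors hnd]
  push_cast
  refine Finset.prod_subset (Nat.primeFactors_mono (Nat.div_dvd_of_dvd hd) hn) ?_
  intro p _ hp
  have : (n / d).factorization p = 0 := by
    rwa [← Finsupp.notMem_support_iff, Nat.support_factorization]
  simp [this]

lemma aux_fact_prod (T : Finset ℕ) (hT : ∀ p ∈ T, p.Prime) (q : ℕ) :
    (∏ p ∈ T, p).factorization q = if q ∈ T then 1 else 0 := by
  classical
  induction T using Finset.induction_on with
  | empty => simp
  | @insert a s ha ih =>
    rw [Finset.prod_insert ha, Nat.factorization_mul (hT a (mem_insert_self a s)).ne_zero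
      (Finset.prod_ne_zero_iff.mpr fun p hp => (hT p (mem_insert_of_mem hp)).ne_zero),
      Finsupp.add_apply, (hT a (mem_insert_self a s)).factorization,
      ih (fun p hp => hT p (mem_insert_of_mem hp))]
    rw [Finsupp.single_apply]
    rcases eq_or_ne a q with rfl | h1
    · simp [ha]
    · simp [h1, Ne.symm h1, Finset.mem_insert]

-- key per-subset computation of the quotient divisor count
lemma aux_tau_quot (n : ℕ) (hn : n ≠ 0) (T : Finset ℕ) (hT : T ⊆ n.primeFactors) :
    (((n / ∏ p ∈ T, p).divisors.card : ℤ)) =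
      (∏ p ∈ T, (n.factorization p : ℤ)) *
        ∏ p ∈ n.primeFactors \ T, ((n.factorization p : ℤ) + 1) := by
  have hTp : ∀ p ∈ T, p.Prime := fun p hp => Nat.prime_of_mem_primeFactors (hT hp)
  have hd : (∏ p ∈ T, p) ∣ n := by
    calc (∏ p ∈ T, p) ∣ ∏ p ∈ n.primeFactors, p :=
          Finset.prod_dvd_prod_of_subset _ _ _ hT
    _ ∣ n := Nat.prod_primeFactors_dvd n
  rw [aux_card_div n _ hn hd]
  have hfac : ∀ p, (n / ∏ q ∈ T, q).factorization p
      = n.factorization p - (if p ∈ T then 1 else 0) := by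
    intro p
    rw [Nat.factorization_div hd, Finsupp.tsub_apply, aux_fact_prod T hTp]
  rw [← Finset.prod_sdiff hT, mul_comm]
  congr 1
  · refine Finset.prod_congr rfl fun p hp => ?_
    have h1 : 1 ≤ n.factorization p := by
      rw [Nat.one_le_iff_ne_zero, ← Finsupp.mem_support_iff, Nat.support_factorization]
      exact hT hp
    rw [hfac p, if_pos hp]
    push_cast [Nat.cast_sub h1]
    ring
  · refine Finset.prod_congr rfl fun p hp => ?_
    have : p ∉ T := (Finset.mem_sdiff.mp hp).2
    rw [hfac p, if_neg this]
    simp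

open ArithmeticFunction in
theorem stmt0 (n m : ℕ) (hn : 0 < n) (hm : 0 < m) :
    ((n * m).divisors.card : ℤ) =
      ∑ d ∈ (Nat.gcd n m).divisors,
        (moebius d : ℤ) * ((n / d).divisors.card : ℤ) * ((m / d).divisors.card : ℤ) := by
  classical
  have hn' : n ≠ 0 := hn.ne'
  have hm' : m ≠ 0 := hm.ne'
  set g := Nat.gcd n m with hgdef
  have hg : g ≠ 0 := Nat.gcd_ne_zero_left hn'
  have hPg : g.primeFactors = n.primeFactors ∩ m.primeFactors := by
    ext p
    simp only [Nat.mem_primeFactors, Finset.mem_inter, hn', hm', hg,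
      ne_eq, not_false_iff, and_true, hgdef, Nat.dvd_gcd_iff]
    tauto
  have hPgn : g.primeFactors ⊆ n.primeFactors := by
    rw [hPg]; exact Finset.inter_subset_left
  have hPgm : g.primeFactors ⊆ m.primeFactors := by
    rw [hPg]; exact Finset.inter_subset_right
  set i : ℕ → ℤ := fun p => (n.factorization p : ℤ) with hi
  set j : ℕ → ℤ := fun p => (m.factorization p : ℤ) with hj
  set Cn : ℤ := ∏ p ∈ n.primeFactors \ g.primeFactors, (i p + 1) with hCn
  set Cm : ℤ := ∏ p ∈ m.primeFactors \ g.primeFactors, (j p + 1) with hCm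
  -- RHS computation
  have step1 : ∑ d ∈ g.divisors,
        (moebius d : ℤ) * ((n / d).divisors.card : ℤ) * ((m / d).divisors.card : ℤ)
      = ∑ d ∈ g.divisors with Squarefree d,
        (moebius d : ℤ) * ((n / d).divisors.card : ℤ) * ((m / d).divisors.card : ℤ) := by
    refine (Finset.sum_filter_of_ne ?_).symm
    intro d _ hne
    by_contra hsq
    rw [moebius_eq_zero_of_not_squarefree hsq] at hne
    simp at hne
  have hto : (UniqueFactorizationMonoid.normalizedFactors g).toFinset = g.primeFactors := by
    rw [Nat.factors_eq]
    simp
  have step2 : ∑ d ∈ g.divisors with Squarefree d,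
        (moebius d : ℤ) * ((n / d).divisors.card : ℤ) * ((m / d).divisors.card : ℤ)
      = ∑ T ∈ g.primeFactors.powerset,
        (moebius (∏ p ∈ T, p) : ℤ) * ((n / ∏ p ∈ T, p).divisors.card : ℤ)
          * ((m / ∏ p ∈ T, p).divisors.card : ℤ) := by
    rw [Nat.sum_divisors_filter_squarefree hg, hto]
    refine Finset.sum_congr rfl fun T _ => ?_
    rw [Finset.prod_val]
    rfl
  -- per-subset evaluation
  have step3 : ∀ T ∈ g.primeFactors.powerset,
      (moebius (∏ p ∈ T, p) : ℤ) * ((n / ∏ p ∈ T, p).divisors.card : ℤ)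
          * ((m / ∏ p ∈ T, p).divisors.card : ℤ)
      = ((∏ p ∈ T, (-(i p * j p))) * ∏ p ∈ g.primeFactors \ T, ((i p + 1) * (j p + 1)))
          * (Cn * Cm) := by
    intro T hTmem
    have hT : T ⊆ g.primeFactors := Finset.mem_powerset.mp hTmem
    have hTp : ∀ p ∈ T, p.Prime := fun p hp => Nat.prime_of_mem_primeFactors (hT hp)
    have hTn : T ⊆ n.primeFactors := hT.trans hPgn
    have hTm : T ⊆ m.primeFactors := hT.trans hPgm
    have hmu : (moebius (∏ p ∈ T, p) : ℤ) = (-1 : ℤ) ^ T.card := by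
      rw [IsMultiplicative.map_prod_of_prime isMultiplicative_moebius T hTp]
      rw [Finset.prod_congr rfl fun p hp => moebius_apply_prime (hTp p hp)]
      simp
    have hsplitn : n.primeFactors \ T
        = (g.primeFactors \ T) ∪ (n.primeFactors \ g.primeFactors) := by
      ext p
      simp only [Finset.mem_sdiff, Finset.mem_union]
      constructor
      · rintro ⟨hpn, hpT⟩
        by_cases hpg : p ∈ g.primeFactors
        · exact Or.inl ⟨hpg, hpT⟩
        · exact Or.inr ⟨hpn, hpg⟩
      · rintro (⟨hpg, hpT⟩ | ⟨hpn, hpg⟩)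
        · exact ⟨hPgn hpg, hpT⟩
        · exact ⟨hpn, fun hpT => hpg (hT hpT)⟩
    have hsplitm : m.primeFactors \ T
        = (g.primeFactors \ T) ∪ (m.primeFactors \ g.primeFactors) := by
      ext p
      simp only [Finset.mem_sdiff, Finset.mem_union]
      constructor
      · rintro ⟨hpn, hpT⟩
        by_cases hpg : p ∈ g.primeFactors
        · exact Or.inl ⟨hpg, hpT⟩
        · exact Or.inr ⟨hpn, hpg⟩
      · rintro (⟨hpg, hpT⟩ | ⟨hpn, hpg⟩)
        · exact ⟨hPgm hpg, hpT⟩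
        · exact ⟨hpn, fun hpT => hpg (hT hpT)⟩
    have hdisn : Disjoint (g.primeFactors \ T) (n.primeFactors \ g.primeFactors) := by
      refine Finset.disjoint_left.mpr fun p hp hp' => ?_
      exact (Finset.mem_sdiff.mp hp').2 (Finset.mem_sdiff.mp hp).1
    have hdism : Disjoint (g.primeFactors \ T) (m.primeFactors \ g.primeFactors) := by
      refine Finset.disjoint_left.mpr fun p hp hp' => ?_
      exact (Finset.mem_sdiff.mp hp').2 (Finset.mem_sdiff.mp hp).1
    rw [hmu, aux_tau_quot n hn' T hTn, aux_tau_quot m hm' T hTm,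
      hsplitn, hsplitm, Finset.prod_union hdisn, Finset.prod_union hdism]
    have hexp : (∏ p ∈ T, (-(i p * j p)))
        = (-1 : ℤ) ^ T.card * (∏ p ∈ T, i p) * ∏ p ∈ T, j p := by
      rw [← Finset.prod_const (-1 : ℤ), ← Finset.prod_mul_distrib,
        ← Finset.prod_mul_distrib]
      exact Finset.prod_congr rfl fun p _ => by ring
    rw [hexp, Finset.prod_mul_distrib]
    ring
  -- sum up via prod_add
  have step4 : ∑ T ∈ g.primeFactors.powerset,
        (moebius (∏ p ∈ T, p) : ℤ) * ((n / ∏ p ∈ T, p).divisors.card : ℤ)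
          * ((m / ∏ p ∈ T, p).divisors.card : ℤ)
      = (∏ p ∈ g.primeFactors, (-(i p * j p) + (i p + 1) * (j p + 1))) * (Cn * Cm) := by
    rw [Finset.sum_congr rfl step3, ← Finset.sum_mul,
      ← Finset.prod_add (fun p => -(i p * j p)) (fun p => (i p + 1) * (j p + 1))]
  -- LHS computation
  have hL : ((n * m).divisors.card : ℤ)
      = ∏ p ∈ n.primeFactors ∪ m.primeFactors, (i p + j p + 1) := by
    rw [Nat.card_divisors (mul_ne_zero hn' hm'), Nat.primeFactors_mul hn' hm']
    push_cast
    refine Finset.prod_congr rfl fun p _ => ?_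
    rw [Nat.factorization_mul hn' hm', Finsupp.add_apply]
    push_cast
    ring
  rw [hL, step1, step2, step4]
  -- final: split the union
  have hzm : ∀ p ∈ n.primeFactors \ g.primeFactors, j p = 0 := by
    intro p hp
    rcases Finset.mem_sdiff.mp hp with ⟨hpn, hpg⟩
    have hpm : p ∉ m.primeFactors := by
      intro hpm
      exact hpg (by rw [hPg]; exact Finset.mem_inter.mpr ⟨hpn, hpm⟩)
    have : m.factorization p = 0 := by
      rwa [← Finsupp.notMem_support_iff, Nat.support_factorization]
    simp [hj, this]
  have hzn : ∀ p ∈ m.primeFactors \ g.primeFactors, i p = 0 := by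
    intro p hp
    rcases Finset.mem_sdiff.mp hp with ⟨hpm, hpg⟩
    have hpn : p ∉ n.primeFactors := by
      intro hpn
      exact hpg (by rw [hPg]; exact Finset.mem_inter.mpr ⟨hpn, hpm⟩)
    have : n.factorization p = 0 := by
      rwa [← Finsupp.notMem_support_iff, Nat.support_factorization]
    simp [hi, this]
  have hsplit : n.primeFactors ∪ m.primeFactors
      = (g.primeFactors ∪ (n.primeFactors \ g.primeFactors))
          ∪ (m.primeFactors \ g.primeFactors) := by
    rw [hPg]
    ext p
    simp only [Finset.mem_union, Finset.mem_sdiff, Finset.mem_inter]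
    tauto
  have hd1 : Disjoint g.primeFactors (n.primeFactors \ g.primeFactors) := by
    refine Finset.disjoint_left.mpr fun p hp hp' => (Finset.mem_sdiff.mp hp').2 hp
  have hd2 : Disjoint (g.primeFactors ∪ (n.primeFactors \ g.primeFactors))
      (m.primeFactors \ g.primeFactors) := by
    refine Finset.disjoint_left.mpr fun p hp hp' => ?_
    rcases Finset.mem_sdiff.mp hp' with ⟨hpm, hpg⟩
    rcases Finset.mem_union.mp hp with h | h
    · exact hpg h
    · rcases Finset.mem_sdiff.mp h with ⟨hpn, _⟩
      exact hpg (by rw [hPg]; exact Finset.mem_inter.mpr ⟨hpn, hpm⟩)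
  rw [hsplit, Finset.prod_union hd2, Finset.prod_union hd1]
  have e1 : ∏ p ∈ g.primeFactors, (i p + j p + 1)
      = ∏ p ∈ g.primeFactors, (-(i p * j p) + (i p + 1) * (j p + 1)) :=
    Finset.prod_congr rfl fun p _ => by ring
  have e2 : ∏ p ∈ n.primeFactors \ g.primeFactors, (i p + j p + 1) = Cn :=
    Finset.prod_congr rfl fun p hp => by rw [hzm p hp]; ring
  have e3 : ∏ p ∈ m.primeFactors \ g.primeFactors, (i p + j p + 1) = Cm :=
    Finset.prod_congr rfl fun p hp => by rw [hzn p hp]; ring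
  rw [e1, e2, e3]
  ring
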